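/- Let G be a non-abelian finite p-group that is decomposable, i.e., G = G₁ × G₂ with G₁, G₂ nontrivial. Then G has a central automorphism of order p that is not inner. -/

import Mathlib

open Pointwise

private lemma my_commutator_ne_top (P : Type*) [Group P] [hs : Group.IsSolvable P] [Nontrivial P] :
    commutator P ≠ ⊤ := by
  intro h
  have key : ∀ n, derivedSeries P n = ⊤ := by
    intro n
    induction n with
    | zero => rfl
    | succ n ih => rw [derivedSeries_succ, ih, ← commutator_def, h]
  obtain ⟨n, hn⟩ := hs.solvable
  obtain ⟨x, hx1⟩ := exists_ne (1 : P)
  refine hx1 (Subgroup.mem_bot.mp ?_)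
  rw [← hn, key n]
  exact Subgroup.mem_top x

private lemma exists_hom_to_zmod {p : ℕ} (hp : p.Prime) (P : Type*) [Group P] [Finite P]
    (h : IsPGroup p P) [Nontrivial P] :
    ∃ (φ : P →* Multiplicative (ZMod p)) (x : P), φ x ≠ 1 := by
  haveI : Fact p.Prime := ⟨hp⟩
  haveI : Group.IsNilpotent P := h.isNilpotent
  have hct : commutator P ≠ ⊤ := my_commutator_ne_top P
  obtain ⟨x, hx⟩ : ∃ x : P, x ∉ commutator P := by
    by_contra hc
    push_neg at hc
    exact hct ((Subgroup.eq_top_iff' _).mpr hc)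
  have hofx : Abelianization.of x ≠ 1 := fun hcon => hx ((QuotientGroup.eq_one_iff x).mp hcon)
  haveI hA : Nontrivial (Abelianization P) := ⟨_, _, hofx⟩
  have hApG : IsPGroup p (Abelianization P) := h.to_quotient (commutator P)
  obtain ⟨n, hn0, hcard⟩ := hApG.nontrivial_iff_card.mp hA
  obtain ⟨H, hH⟩ := Sylow.exists_subgroup_card_pow_prime (G := Abelianization P) p
    (n := n - 1) (hcard ▸ pow_dvd_pow p (Nat.sub_le n 1))
  have hQcard : Nat.card (Abelianization P ⧸ H) = p := by
    have hmul := Subgroup.card_eq_card_quotient_mul_card_subgroup H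
    rw [hcard, hH] at hmul
    have e1 : p * p ^ (n - 1) = p ^ n := by
      rw [← pow_succ']
      congr 1
      omega
    have h2 : Nat.card (Abelianization P ⧸ H) * p ^ (n - 1) = p * p ^ (n - 1) := by
      rw [e1, hmul]
    exact Nat.eq_of_mul_eq_mul_right (pow_pos hp.pos _) h2
  haveI : IsCyclic (Abelianization P ⧸ H) := isCyclic_of_prime_card hQcard
  have e := (zmodCyclicMulEquiv
    (inferInstance : IsCyclic (Abelianization P ⧸ H))).symm
  rw [hQcard] at e
  haveI : Nontrivial (Abelianization P ⧸ H) :=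
    Finite.one_lt_card_iff_nontrivial.mp (by rw [hQcard]; exact hp.one_lt)
  obtain ⟨q0, hq0⟩ := exists_ne (1 : Abelianization P ⧸ H)
  obtain ⟨a, rfl⟩ := QuotientGroup.mk'_surjective H q0
  have hofsurj : Function.Surjective (Abelianization.of (G := P)) :=
    fun b => Quotient.exists_rep b
  obtain ⟨y, rfl⟩ := hofsurj a
  refine ⟨(e.toMonoidHom.comp (QuotientGroup.mk' H)).comp Abelianization.of, y, ?_⟩
  intro hcon
  exact hq0 (e.map_eq_one_iff.mp (by simpa using hcon))

/-- Let `G` be a non-abelian finite `p`-group which is decomposable: `G = G₁ × G₂`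
internally, with `G₁, G₂` nontrivial normal subgroups.  Then `G` has a central
automorphism of order `p` which is not inner. -/
theorem decomposable_has_noninner_central_auto {p : ℕ} (hp : p.Prime) {G : Type*}
    [Group G] [Finite G] (hG : IsPGroup p G)
    (hnab : ∃ a b : G, a * b ≠ b * a)
    (G₁ G₂ : Subgroup G) (h₁ : G₁.Normal) (h₂ : G₂.Normal)
    (hdisj : Disjoint G₁ G₂) (hsup : G₁ ⊔ G₂ = ⊤)
    (hnt₁ : G₁ ≠ ⊥) (hnt₂ : G₂ ≠ ⊥) :
    ∃ σ : MulAut G, (∀ x : G, x⁻¹ * σ x ∈ Subgroup.center G) ∧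
      orderOf σ = p ∧ ¬ ∃ g : G, ∀ x : G, σ x = g * x * g⁻¹ := by
  haveI : Fact p.Prime := ⟨hp⟩
  haveI : NeZero p := ⟨hp.ne_zero⟩
  haveI := h₁
  haveI := h₂
  -- a central element `z` of order `p` inside `G₂`
  haveI hnt₂' : Nontrivial ↥G₂ := (Subgroup.nontrivial_iff_ne_bot G₂).mpr hnt₂
  have hG₂p : IsPGroup p ↥G₂ := hG.to_subgroup G₂
  haveI := hG₂p.center_nontrivial
  obtain ⟨⟨w₀, hw₀c⟩, hw₀1⟩ := exists_ne (1 : Subgroup.center ↥G₂)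
  have hw₀ne : w₀ ≠ 1 := fun h => hw₀1 (Subtype.ext h)
  obtain ⟨k0, hk0⟩ := hG₂p w₀
  have hdvd : orderOf w₀ ∣ p ^ k0 := orderOf_dvd_of_pow_eq_one hk0
  obtain ⟨m, hmle, hm⟩ := (Nat.dvd_prime_pow hp).mp hdvd
  have hm0 : m ≠ 0 := by
    intro h
    rw [h, pow_zero] at hm
    exact hw₀ne (orderOf_eq_one_iff.mp hm)
  set w : ↥G₂ := w₀ ^ p ^ (m - 1) with hw
  have hwp : w ^ p = 1 := by
    have h' : p ^ (m - 1) * p = p ^ m := by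
      rw [← pow_succ]
      congr 1
      omega
    rw [hw, ← pow_mul, h', ← hm, pow_orderOf_eq_one]
  have hwne : w ≠ 1 := by
    intro h
    have h1 : orderOf w₀ ∣ p ^ (m - 1) := orderOf_dvd_of_pow_eq_one h
    rw [hm] at h1
    have h2 := Nat.le_of_dvd (pow_pos hp.pos _) h1
    have h3 : p ^ (m - 1) < p ^ m := Nat.pow_lt_pow_right hp.one_lt (by omega)
    omega
  have hordw : orderOf w = p := orderOf_eq_prime hwp hwne
  have hwc : w ∈ Subgroup.center ↥G₂ := Subgroup.pow_mem _ hw₀c _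
  set z : G := (w : G) with hz
  have hzG₂ : z ∈ G₂ := w.2
  have hordz : orderOf z = p := by
    rw [← hordw]
    exact orderOf_injective G₂.subtype G₂.subtype_injective w
  -- every element of `G` decomposes as a product
  have hdecomp : ∀ g : G, ∃ a ∈ G₁, ∃ b ∈ G₂, g = a * b := by
    intro g
    have hg : g ∈ (G₁ : Set G) * (G₂ : Set G) := by
      rw [← Subgroup.mul_normal]
      exact hsup ▸ Subgroup.mem_top g
    rw [Set.mem_mul] at hg
    obtain ⟨a, ha, b, hb, hab⟩ := hg
    exact ⟨a, ha, b, hb, hab.symm⟩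
  -- z is central in G
  have hzcomm : ∀ g : G, g * z = z * g := by
    intro g
    obtain ⟨a, ha, b, hb, rfl⟩ := hdecomp g
    have hca : a * z = z * a :=
      (Subgroup.commute_of_normal_of_disjoint G₁ G₂ h₁ h₂ hdisj a z ha hzG₂).eq
    have hcb : b * z = z * b := by
      have h' : (⟨b, hb⟩ : ↥G₂) * w = w * ⟨b, hb⟩ := Subgroup.mem_center_iff.mp hwc ⟨b, hb⟩
      exact congrArg Subtype.val h'
    rw [mul_assoc, hcb, ← mul_assoc, hca, mul_assoc]
  have hzcen : z ∈ Subgroup.center G := Subgroup.mem_center_iff.mpr hzcomm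
  -- a homomorphism to ZMod p killing G₂, nontrivial on G₁
  obtain ⟨a₁, ha₁G, ha₁ne⟩ : ∃ a ∈ G₁, a ≠ (1 : G) := by
    obtain ⟨⟨a, haG⟩, hane⟩ := Subgroup.ne_bot_iff_exists_ne_one.mp hnt₁
    exact ⟨a, haG, fun h => hane (Subtype.ext h)⟩
  haveI : Nontrivial (G ⧸ G₂) := by
    refine ⟨⟨QuotientGroup.mk a₁, 1, ?_⟩⟩
    intro h
    have h1 : a₁ ∈ G₂ := (QuotientGroup.eq_one_iff a₁).mp h
    have h2 : a₁ ∈ G₁ ⊓ G₂ := Subgroup.mem_inf.mpr ⟨ha₁G, h1⟩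
    exact ha₁ne (Subgroup.mem_bot.mp (hdisj.le_bot h2))
  obtain ⟨φ, xbar, hφx⟩ := exists_hom_to_zmod hp (G ⧸ G₂) (hG.to_quotient G₂)
  set f : G →* Multiplicative (ZMod p) := φ.comp (QuotientGroup.mk' G₂) with hf
  have hfG₂ : ∀ b ∈ G₂, f b = 1 := by
    intro b hb
    have h' : QuotientGroup.mk' G₂ b = 1 := (QuotientGroup.eq_one_iff b).mpr hb
    rw [hf, MonoidHom.comp_apply, h', map_one]
  obtain ⟨xg, hxg⟩ := QuotientGroup.mk'_surjective G₂ xbar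
  have hfxg : f xg ≠ 1 := by
    rw [hf, MonoidHom.comp_apply, hxg]
    exact hφx
  obtain ⟨x₀, hx₀G, b0, hb0, hxgeq⟩ := hdecomp xg
  have hfx₀ : f x₀ ≠ 1 := by
    intro h
    apply hfxg
    rw [hxgeq, map_mul, h, hfG₂ b0 hb0, mul_one]
  -- the exponent function
  set k : G → ℕ := fun x => (Multiplicative.toAdd (f x)).val with hk
  have hzp1 : z ^ p = 1 := by
    rw [← hordz]
    exact pow_orderOf_eq_one z
  have hzpow_add : ∀ a b : ZMod p, z ^ (a + b).val = z ^ a.val * z ^ b.val := by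
    intro a b
    rw [← pow_add, ZMod.val_add]
    conv_rhs => rw [← pow_mod_orderOf, hordz]
  have hkmul : ∀ x y : G, z ^ k (x * y) = z ^ k x * z ^ k y := by
    intro x y
    have h' : z ^ k (x * y)
        = z ^ (Multiplicative.toAdd (f x) + Multiplicative.toAdd (f y)).val := by
      rw [hk]
      simp only [map_mul, toAdd_mul]
    rw [h', hzpow_add]
  have hzcomm' : ∀ (g : G) (n : ℕ), g * z ^ n = z ^ n * g := by
    intro g n
    exact Subgroup.mem_center_iff.mp (Subgroup.pow_mem _ hzcen n) g
  have hfz : ∀ n : ℕ, f (z ^ n) = 1 := by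
    intro n
    rw [map_pow, hfG₂ z hzG₂, one_pow]
  have hkz : ∀ (x : G) (n : ℕ), k (x * z ^ n) = k x := by
    intro x n
    rw [hk]
    simp only [map_mul, hfz, mul_one]
  have hkzi : ∀ (x : G) (n : ℕ), k (x * (z ^ n)⁻¹) = k x := by
    intro x n
    rw [hk]
    simp only [map_mul, map_inv, hfz, inv_one, mul_one]
  -- the automorphism
  let σ : MulAut G :=
    { toFun := fun x => x * z ^ k x
      invFun := fun x => x * (z ^ k x)⁻¹
      left_inv := by
        intro x
        simp only [hkz, mul_inv_cancel_right]
      right_inv := by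
        intro x
        simp only [hkzi, inv_mul_cancel_right]
      map_mul' := by
        intro x y
        simp only [hkmul, mul_assoc]
        congr 1
        rw [← mul_assoc, ← mul_assoc, hzcomm' y (k x)]
      }
  have hσdef : ∀ x : G, σ x = x * z ^ k x := fun _ => rfl
  have hk₀ : k x₀ ≠ 0 := by
    intro h
    apply hfx₀
    have h1 : Multiplicative.toAdd (f x₀) = 0 := (ZMod.val_eq_zero _).mp h
    rw [← ofAdd_toAdd (f x₀), h1, ofAdd_zero]
  have hklt : k x₀ < p := ZMod.val_lt _
  have hzk₀ : z ^ k x₀ ≠ 1 := by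
    intro h
    have h1 : orderOf z ∣ k x₀ := orderOf_dvd_of_pow_eq_one h
    rw [hordz] at h1
    have h2 := Nat.le_of_dvd (Nat.pos_of_ne_zero hk₀) h1
    omega
  refine ⟨σ, ?_, ?_, ?_⟩
  · intro x
    have h' : x⁻¹ * σ x = z ^ k x := by
      rw [hσdef, ← mul_assoc, inv_mul_cancel, one_mul]
    rw [h']
    exact Subgroup.pow_mem _ hzcen _
  · have hpow : ∀ (n : ℕ) (x : G), (σ ^ n) x = x * z ^ (n * k x) := by
      intro n
      induction n with
      | zero => intro x; simp
      | succ n ih =>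
        intro x
        rw [pow_succ, MulAut.mul_apply, ih (σ x), hσdef, hkz, mul_assoc, ← pow_add]
        congr 1
        ring
    have hσp : σ ^ p = 1 := by
      refine MulEquiv.ext fun x => ?_
      rw [hpow p x, pow_mul, hzp1, one_pow, mul_one]
      rfl
    have hσne : σ ≠ 1 := by
      intro h
      apply hzk₀
      have h1 : x₀ * z ^ k x₀ = x₀ * 1 := by
        rw [mul_one, ← hσdef, h]
        rfl
      exact mul_left_cancel h1
    exact orderOf_eq_prime hσp hσne
  · rintro ⟨g, hg⟩
    have h2 := hg x₀
    rw [hσdef] at h2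
    have h3 : z ^ k x₀ = x₀⁻¹ * (g * x₀ * g⁻¹) := by
      rw [← h2, ← mul_assoc, inv_mul_cancel, one_mul]
    have hmem₁ : z ^ k x₀ ∈ G₁ := by
      rw [h3]
      exact G₁.mul_mem (G₁.inv_mem hx₀G) (h₁.conj_mem x₀ hx₀G g)
    have hmem₂ : z ^ k x₀ ∈ G₂ := G₂.pow_mem hzG₂ _
    exact hzk₀ (Subgroup.mem_bot.mp (hdisj.le_bot (Subgroup.mem_inf.mpr ⟨hmem₁, hmem₂⟩)))
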